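/- Every binary word of length k² + 6k contains an abelian square xx′ with |x| ≥ k (Entringer–Jackson–Schatz). -/

import Mathlib

open List

private lemma ejs_count_len (l : List Bool) : l.count false + l.count true = l.length := by
  induction l with
  | nil => simp
  | cons a t ih => cases a <;> simp [List.count_cons] <;> omega

private lemma ejs_perm_of_bool (l₁ l₂ : List Bool) (hl : l₁.length = l₂.length)
    (hc : l₁.count true = l₂.count true) : l₁.Perm l₂ := by
  rw [List.perm_iff_count]
  intro b
  have h1 := ejs_count_len l₁
  have h2 := ejs_count_len l₂
  cases b
  · omega
  · exact hc

theorem stmt_10 (k : ℕ) (hk : 1 ≤ k) (w : List Bool) (hw : w.length = k ^ 2 + 6 * k) :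
    ∃ u v x x' : List Bool, w = u ++ x ++ x' ++ v ∧ k ≤ x.length ∧ x'.Perm x := by
  by_contra hcon
  push_neg at hcon
  have hksq : k ^ 2 = k * k := sq k
  set n := k ^ 2 + 6 * k with hn
  -- prefix 1-count
  set P : ℕ → ℤ := fun i => ((w.take i).count true : ℤ) with hPdef
  set f : ℕ → ℤ := fun i => (((w.drop i).take 1).count true : ℤ) with hfdef
  have hblock : ∀ s t : ℕ, P (s + t) = P s + (((w.drop s).take t).count true : ℤ) := by
    intro s t
    simp only [hPdef]
    rw [List.take_add, List.count_append]
    push_cast; ring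
  have hstep : ∀ i : ℕ, P (i + 1) = P i + f i := fun i => hblock i 1
  have hf : ∀ i, f i = 0 ∨ f i = 1 := by
    intro i
    have h1 : ((w.drop i).take 1).count true ≤ ((w.drop i).take 1).length :=
      List.count_le_length
    have h2 : ((w.drop i).take 1).length ≤ 1 := by
      rw [List.length_take]; omega
    simp only [hfdef]
    omega
  have hcnt0 : ∀ s t : ℕ, P s ≤ P (s + t) := by
    intro s t
    rw [hblock]
    have : (0 : ℤ) ≤ (((w.drop s).take t).count true : ℤ) := by positivity
    linarith
  have hcntt : ∀ s t : ℕ, P (s + t) ≤ P s + t := by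
    intro s t
    rw [hblock]
    have h1 : ((w.drop s).take t).count true ≤ ((w.drop s).take t).length :=
      List.count_le_length
    have h2 : ((w.drop s).take t).length ≤ t := by rw [List.length_take]; omega
    have : (((w.drop s).take t).count true : ℤ) ≤ (t : ℤ) := by exact_mod_cast le_trans h1 h2
    linarith
  have hconst : ∀ (s : ℕ) (e : ℤ) (t : ℕ),
      (∀ j, j < t → f (s + j) = e) → P (s + t) = P s + t * e := by
    intro s e t
    induction t with
    | zero => intro _; simp
    | succ t ih =>
      intro hj
      have h1 : s + (t + 1) = (s + t) + 1 := by omega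
      rw [h1, hstep, ih (fun j hj' => hj j (by omega)), hj t (by omega)]
      push_cast; ring
  -- avoidance
  have hA : ∀ i m : ℕ, k ≤ m → i + 2 * m ≤ n →
      P i + P (i + 2 * m) ≠ 2 * P (i + m) := by
    intro i m hm hlen heq
    have hwn : i + 2 * m ≤ w.length := by rw [hw]; exact hlen
    have hxlen : ((w.drop i).take m).length = m := by
      rw [List.length_take, List.length_drop]; omega
    have hx'len : ((w.drop (i + m)).take m).length = m := by
      rw [List.length_take, List.length_drop]; omega
    have hc1 : P (i + m) = P i + (((w.drop i).take m).count true : ℤ) := hblock i m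
    have hc2 : P (i + 2 * m) = P (i + m) + (((w.drop (i + m)).take m).count true : ℤ) := by
      have h2 : i + 2 * m = (i + m) + m := by omega
      rw [h2]; exact hblock (i + m) m
    have hcounts : ((w.drop (i + m)).take m).count true = ((w.drop i).take m).count true := by
      omega
    have e1 : w.take (i + m) = w.take i ++ (w.drop i).take m := List.take_add
    have e2 : w.take (i + 2 * m) = w.take (i + m) ++ (w.drop (i + m)).take m := by
      have h2 : i + 2 * m = (i + m) + m := by omega
      rw [h2]; exact List.take_add
    have hdec : w = w.take i ++ (w.drop i).take m ++ (w.drop (i + m)).take m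
        ++ w.drop (i + 2 * m) := by
      conv_lhs => rw [← List.take_append_drop (i + 2 * m) w]
      rw [e2, e1, List.append_assoc, List.append_assoc]
    exact hcon _ _ _ _ hdec (by omega)
      (ejs_perm_of_bool _ _ (by rw [hxlen, hx'len]) hcounts)
  -- second difference
  set R : ℕ → ℕ → ℤ := fun i m => P i + P (i + 2 * m) - 2 * P (i + m) with hRdef
  have hA' : ∀ i m : ℕ, k ≤ m → i + 2 * m ≤ n → R i m ≠ 0 := by
    intro i m hm hlen h0
    exact hA i m hm hlen (by simp only [hRdef] at h0; linarith)
  -- sign persistence upward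
  have hup : ∀ c : ℕ, 3 * k ≤ c + 1 → c + 3 * k ≤ n → 0 < R (c - k) k →
      ∀ j, j ≤ 2 * k - 1 → 0 < R (c - (k + j)) (k + j) := by
    intro c hc1 hc2 hbase j
    induction j with
    | zero => intro _; simpa using hbase
    | succ j ih =>
      intro hj
      have hprev : 0 < R (c - (k + j)) (k + j) := ih (by omega)
      -- index identities
      have hm1 : k + j + 1 ≤ c := by omega
      have i1 : (c - (k + j) - 1) + 1 = c - (k + j) := by omega
      have i2 : c - (k + (j + 1)) = c - (k + j) - 1 := by omega
      have i3 : c - (k + (j + 1)) + 2 * (k + (j + 1)) = (c + (k + j)) + 1 := by omega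
      have i4 : c - (k + (j + 1)) + (k + (j + 1)) = c := by omega
      have i5 : c - (k + j) + 2 * (k + j) = c + (k + j) := by omega
      have i6 : c - (k + j) + (k + j) = c := by omega
      have e1 : P (c - (k + j)) = P (c - (k + j) - 1) + f (c - (k + j) - 1) := by
        rw [← i1]; exact hstep _
      have e2 : P ((c + (k + j)) + 1) = P (c + (k + j)) + f (c + (k + j)) := hstep _
      have hid : R (c - (k + (j + 1))) (k + (j + 1)) =
          R (c - (k + j)) (k + j) + f (c + (k + j)) - f (c - (k + j) - 1) := by
        simp only [hRdef]
        rw [i3, i4, i2, i5, i6, e2, e1]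
        ring
      have hne : R (c - (k + (j + 1))) (k + (j + 1)) ≠ 0 := by
        apply hA'
        · omega
        · omega
      have hf1 := hf (c + (k + j))
      have hf2 := hf (c - (k + j) - 1)
      omega
  -- sign persistence downward
  have hdown : ∀ c : ℕ, 3 * k ≤ c + 1 → c + 3 * k ≤ n → R (c - k) k < 0 →
      ∀ j, j ≤ 2 * k - 1 → R (c - (k + j)) (k + j) < 0 := by
    intro c hc1 hc2 hbase j
    induction j with
    | zero => intro _; simpa using hbase
    | succ j ih =>
      intro hj
      have hprev : R (c - (k + j)) (k + j) < 0 := ih (by omega)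
      have hm1 : k + j + 1 ≤ c := by omega
      have i1 : (c - (k + j) - 1) + 1 = c - (k + j) := by omega
      have i2 : c - (k + (j + 1)) = c - (k + j) - 1 := by omega
      have i3 : c - (k + (j + 1)) + 2 * (k + (j + 1)) = (c + (k + j)) + 1 := by omega
      have i4 : c - (k + (j + 1)) + (k + (j + 1)) = c := by omega
      have i5 : c - (k + j) + 2 * (k + j) = c + (k + j) := by omega
      have i6 : c - (k + j) + (k + j) = c := by omega
      have e1 : P (c - (k + j)) = P (c - (k + j) - 1) + f (c - (k + j) - 1) := by
        rw [← i1]; exact hstep _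
      have e2 : P ((c + (k + j)) + 1) = P (c + (k + j)) + f (c + (k + j)) := hstep _
      have hid : R (c - (k + (j + 1))) (k + (j + 1)) =
          R (c - (k + j)) (k + j) + f (c + (k + j)) - f (c - (k + j) - 1) := by
        simp only [hRdef]
        rw [i3, i4, i2, i5, i6, e2, e1]
        ring
      have hne : R (c - (k + (j + 1))) (k + (j + 1)) ≠ 0 := by
        apply hA'
        · omega
        · omega
      have hf1 := hf (c + (k + j))
      have hf2 := hf (c - (k + j) - 1)
      omega
  -- no sign flip in the interior
  have hflip : ∀ c : ℕ, 3 * k ≤ c + 1 → c + 3 * k + 1 ≤ n →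
      (0 < R (c - k) k ↔ 0 < R (c + 1 - k) k) := by
    intro c hc1 hc2
    have hn1 : R (c - k) k ≠ 0 := hA' _ _ le_rfl (by omega)
    have hn2 : R (c + 1 - k) k ≠ 0 := hA' _ _ le_rfl (by omega)
    -- common machinery: from opposite signs derive a constant run and contradiction
    have key : ∀ e : ℤ, (e = 0 ∨ e = 1) →
        (∀ j, j ≤ 2 * k - 1 → f (c + (k + j)) = e) → False := by
      intro e he hrun
      have c1 : P ((c + k) + k) = P (c + k) + k * e :=
        hconst (c + k) e k (by
          intro j hj
          have := hrun j (by omega)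
          have hi : c + k + j = c + (k + j) := by omega
          rw [hi]; exact this)
      have c2 : P ((c + k) + 2 * k) = P (c + k) + (2 * k) * e :=
        hconst (c + k) e (2 * k) (by
          intro j hj
          have := hrun j (by omega)
          have hi : c + k + j = c + (k + j) := by omega
          rw [hi]; exact this)
      have hzero : R (c + k) k = 0 := by
        simp only [hRdef]
        rw [c1, c2]
        ring
      exact hA' (c + k) k le_rfl (by omega) hzero
    constructor
    · intro hpos
      by_contra hneg'
      have hneg : R (c + 1 - k) k < 0 := by
        rcases lt_trichotomy (R (c + 1 - k) k) 0 with h | h | h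
        · exact h
        · exact absurd h hn2
        · exact absurd h hneg'
      apply key 0 (Or.inl rfl)
      intro j hj
      have hu := hup c hc1 (by omega) hpos j hj
      have hd := hdown (c + 1) (by omega) (by omega) hneg j hj
      -- translate indices for the c+1 case
      have hm1 : k + j ≤ c := by omega
      have i1 : c + 1 - (k + j) = (c - (k + j)) + 1 := by omega
      have i2 : c + 1 - (k + j) + 2 * (k + j) = (c + (k + j)) + 1 := by omega
      have i3 : c + 1 - (k + j) + (k + j) = c + 1 := by omega
      have i5 : c - (k + j) + 2 * (k + j) = c + (k + j) := by omega
      have i6 : c - (k + j) + (k + j) = c := by omega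
      have e1 : P ((c - (k + j)) + 1) = P (c - (k + j)) + f (c - (k + j)) := hstep _
      have e2 : P ((c + (k + j)) + 1) = P (c + (k + j)) + f (c + (k + j)) := hstep _
      have e3 : P (c + 1) = P c + f c := hstep _
      have hid : R (c + 1 - (k + j)) (k + j) - R (c - (k + j)) (k + j) =
          f (c - (k + j)) + f (c + (k + j)) - 2 * f c := by
        simp only [hRdef]
        rw [i2, i3, i1, i5, i6, e1, e2, e3]
        ring
      have hf1 := hf (c - (k + j))
      have hf2 := hf (c + (k + j))
      have hf3 := hf c
      omega
    · intro hpos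
      by_contra hneg'
      have hneg : R (c - k) k < 0 := by
        rcases lt_trichotomy (R (c - k) k) 0 with h | h | h
        · exact h
        · exact absurd h hn1
        · exact absurd h hneg'
      apply key 1 (Or.inr rfl)
      intro j hj
      have hd := hdown c hc1 (by omega) hneg j hj
      have hu := hup (c + 1) (by omega) (by omega) hpos j hj
      have hm1 : k + j ≤ c := by omega
      have i1 : c + 1 - (k + j) = (c - (k + j)) + 1 := by omega
      have i2 : c + 1 - (k + j) + 2 * (k + j) = (c + (k + j)) + 1 := by omega
      have i3 : c + 1 - (k + j) + (k + j) = c + 1 := by omega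
      have i5 : c - (k + j) + 2 * (k + j) = c + (k + j) := by omega
      have i6 : c - (k + j) + (k + j) = c := by omega
      have e1 : P ((c - (k + j)) + 1) = P (c - (k + j)) + f (c - (k + j)) := hstep _
      have e2 : P ((c + (k + j)) + 1) = P (c + (k + j)) + f (c + (k + j)) := hstep _
      have e3 : P (c + 1) = P c + f c := hstep _
      have hid : R (c + 1 - (k + j)) (k + j) - R (c - (k + j)) (k + j) =
          f (c - (k + j)) + f (c + (k + j)) - 2 * f c := by
        simp only [hRdef]
        rw [i2, i3, i1, i5, i6, e1, e2, e3]
        ring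
      have hf1 := hf (c - (k + j))
      have hf2 := hf (c + (k + j))
      have hf3 := hf c
      omega
  -- base point b = 2k - 1
  obtain ⟨b, hb⟩ : ∃ b, b + 1 = 2 * k := ⟨2 * k - 1, by omega⟩
  -- constant sign along the chain
  have hchain : ∀ d : ℕ, d ≤ k ^ 2 → (0 < R (b + d) k ↔ 0 < R b k) := by
    intro d
    induction d with
    | zero => intro _; rw [Nat.add_zero]
    | succ d ih =>
      intro hd
      have hstep' := hflip (b + d + k) (by omega) (by omega)
      have i1 : b + d + k - k = b + d := by omega
      have i2 : b + d + k + 1 - k = b + (d + 1) := by omega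
      rw [i1, i2] at hstep'
      exact (hstep'.symm).trans (ih (by omega))
  have hsign : R b k ≠ 0 := hA' b k le_rfl (by omega)
  have hmonoidx : ∀ j : ℕ, j ≤ k → j * k ≤ k ^ 2 := by
    intro j hj
    calc j * k ≤ k * k := Nat.mul_le_mul_right k hj
    _ = k ^ 2 := hksq.symm
  -- E j = P (b + j*k)
  set E : ℕ → ℤ := fun j => P (b + j * k) with hEdef
  have hRE : ∀ j : ℕ, R (b + j * k) k = E j + E (j + 2) - 2 * E (j + 1) := by
    intro j
    have i1 : b + j * k + 2 * k = b + (j + 2) * k := by ring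
    have i2 : b + j * k + k = b + (j + 1) * k := by ring
    simp only [hRdef, hEdef, i1, i2]
  rcases lt_trichotomy (R b k) 0 with hneg | h0 | hpos
  · -- concave case
    have hmono : ∀ j : ℕ, j ≤ k → R (b + j * k) k < 0 := by
      intro j hj
      have hne : R (b + j * k) k ≠ 0 := hA' _ _ le_rfl (by
        have := hmonoidx j hj; omega)
      rcases lt_trichotomy (R (b + j * k) k) 0 with h | h | h
      · exact h
      · exact absurd h hne
      · exact absurd ((hchain (j * k) (hmonoidx j hj)).mp h) (by omega)
    have haux : ∀ j : ℕ, j ≤ k + 1 → E (j + 1) - E j ≤ E 1 - E 0 - j := by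
      intro j
      induction j with
      | zero => intro _; simp
      | succ j ih =>
        intro hj
        have h1 := ih (by omega)
        have h2 := hmono j (by omega)
        rw [hRE j] at h2
        push_cast
        push_cast at h1
        linarith
    have hfin := haux (k + 1) le_rfl
    have hlow : (0 : ℤ) ≤ E (k + 2) - E (k + 1) := by
      have i1 : b + (k + 1) * k + k = b + (k + 2) * k := by ring
      have := hcnt0 (b + (k + 1) * k) k
      rw [i1] at this
      simpa [hEdef] using this
    have hhigh : E 1 - E 0 ≤ (k : ℤ) := by
      have i1 : b + k = b + 1 * k := by ring
      have := hcntt b k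
      rw [i1] at this
      simp only [hEdef]
      have i0 : b + 0 * k = b := by ring
      rw [i0]
      linarith
    have : ((k : ℤ) + 1) ≤ (k : ℤ) := by push_cast at hfin; linarith
    omega
  · exact hsign h0
  · -- convex case
    have hmono : ∀ j : ℕ, j ≤ k → 0 < R (b + j * k) k := by
      intro j hj
      exact (hchain (j * k) (hmonoidx j hj)).mpr hpos
    have haux : ∀ j : ℕ, j ≤ k + 1 → E 1 - E 0 + j ≤ E (j + 1) - E j := by
      intro j
      induction j with
      | zero => intro _; simp
      | succ j ih =>
        intro hj
        have h1 := ih (by omega)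
        have h2 := hmono j (by omega)
        rw [hRE j] at h2
        push_cast
        push_cast at h1
        linarith
    have hfin := haux (k + 1) le_rfl
    have hlow : (0 : ℤ) ≤ E 1 - E 0 := by
      have i1 : b + k = b + 1 * k := by ring
      have := hcnt0 b k
      rw [i1] at this
      simp only [hEdef]
      have i0 : b + 0 * k = b := by ring
      rw [i0]
      linarith
    have hhigh : E (k + 2) - E (k + 1) ≤ (k : ℤ) := by
      have i1 : b + (k + 1) * k + k = b + (k + 2) * k := by ring
      have := hcntt (b + (k + 1) * k) k
      rw [i1] at this
      simp only [hEdef]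
      linarith
    have : ((k : ℤ) + 1) ≤ (k : ℤ) := by push_cast at hfin; linarith
    omega
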